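/- Let E be a finite directed graph with Cuntz-Krieger family {P_v}, {S_e} on a Hilbert space, and define S := Σ_{e ∈ E¹} (1/√n_{r(e)}) S_e where n_v = |r^{-1}(v)|. Then S is a partial isometry with S*S = Σ_{v ∈ r(E¹)} P_v, and setting S_e' := √n_{r(e)} · (S_e S_e*) · S recovers S_e' = S_e for all e ∈ E¹; moreover S*P_v S = Σ_{e ∈ s^{-1}(v)} P_{r(e)}/n_{r(e)} for v not a sink and S*P_v S = 0 for v a sink. -/

import Mathlib

/-- A finite directed graph `E = (E⁰, E¹, r, s)`. -/
structure FinGraph where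
  V : Type
  E : Type
  [fV : Fintype V]
  [fE : Fintype E]
  [dV : DecidableEq V]
  [dE : DecidableEq E]
  s : E → V
  r : E → V

attribute [instance] FinGraph.fV FinGraph.fE FinGraph.dV FinGraph.dE

/-- A path of length `n` in the graph `G`. -/
structure GPath (G : FinGraph) (n : ℕ) where
  vert : Fin (n + 1) → G.V
  edge : Fin n → G.E
  src_eq : ∀ i : Fin n, G.s (edge i) = vert i.castSucc
  rng_eq : ∀ i : Fin n, G.r (edge i) = vert i.succ

namespace GPath
variable {G : FinGraph} {n : ℕ}
def src (p : GPath G n) : G.V := p.vert 0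
def rng (p : GPath G n) : G.V := p.vert (Fin.last n)
end GPath

/-- A Cuntz–Krieger `E`-family in a C*-algebra `B`: mutually orthogonal nonzero
projections `{P_v}` and partial isometries `{S_e}` with `S_e* S_e = P_{r(e)}` and
`P_v = Σ_{s(e)=v} S_e S_e*` for every non-sink `v`. -/
structure CKFamily (G : FinGraph) (B : Type*) [CStarAlgebra B] where
  P : G.V → B
  S : G.E → B
  P_ne : ∀ v : G.V, P v ≠ 0
  P_sa : ∀ v : G.V, star (P v) = P v
  P_idem : ∀ v : G.V, P v * P v = P v
  P_orth : ∀ v w : G.V, v ≠ w → P v * P w = 0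
  SS : ∀ e : G.E, star (S e) * S e = P (G.r e)
  CK : ∀ v : G.V, (∃ e : G.E, G.s e = v) →
    P v = ∑ e ∈ Finset.univ.filter (fun e => G.s e = v), S e * star (S e)

/-- The partial isometry `S_μ = S_{μ₁} ⋯ S_{μ_n}` associated to a path `μ`. -/
def CKFamily.SP {G : FinGraph} {B : Type*} [CStarAlgebra B] (F : CKFamily G B)
    {n : ℕ} (p : GPath G n) : B :=
  (List.ofFn (fun i : Fin n => F.S (p.edge i))).prod

/-- The number of edges with range `v`. -/
def nIn (G : FinGraph) (v : G.V) : ℕ := (Finset.univ.filter (fun e => G.r e = v)).card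

section OrderAux
variable {A : Type*} [NormedRing A] [StarRing A] [CStarRing A] [PartialOrder A]
  [StarOrderedRing A]

lemma proj_nonneg {p : A} (hsa : star p = p) (hid : p * p = p) : 0 ≤ p := by
  calc (0:A) ≤ star p * p := star_mul_self_nonneg p
    _ = p := by rw [hsa, hid]

lemma proj_mul_of_le {p q : A} (hp : star p = p) (hp2 : p * p = p)
    (hq : star q = q) (hq2 : q * q = q) (hle : p ≤ q) :
    q * p = p ∧ p * q = p := by
  have h0 : (1 - q) * p * (1 - q) ≤ (1 - q) * q * (1 - q) := by
    have := star_left_conjugate_le_conjugate hle (1 - q)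
    simpa [star_sub, hq] using this
  have h1 : (1 - q) * q * (1 - q) = 0 := by
    rw [sub_mul, one_mul, hq2, sub_self, zero_mul]
  have key : star (p * (1 - q)) * (p * (1 - q)) = (1 - q) * p * (1 - q) := by
    rw [star_mul, hp, star_sub, star_one, hq]
    calc (1 - q) * p * (p * (1 - q)) = (1 - q) * (p * p) * (1 - q) := by noncomm_ring
      _ = (1 - q) * p * (1 - q) := by rw [hp2]
  have hnn : 0 ≤ (1 - q) * p * (1 - q) := key ▸ star_mul_self_nonneg _
  have hz : (1 - q) * p * (1 - q) = 0 := le_antisymm (h1 ▸ h0) hnn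
  have hx : p * (1 - q) = 0 := by
    rw [← CStarRing.star_mul_self_eq_zero_iff, key, hz]
  have hpq : p * q = p := by
    have := hx
    rw [mul_sub, mul_one, sub_eq_zero] at this
    exact this.symm
  refine ⟨?_, hpq⟩
  have := congrArg star hpq
  rwa [star_mul, hp, hq] at this

lemma sum_proj_orth {ι : Type*} [DecidableEq ι] (s : Finset ι) (p : ι → A)
    (hsa : ∀ i ∈ s, star (p i) = p i) (hid : ∀ i ∈ s, p i * p i = p i)
    (hq : (∑ i ∈ s, p i) * (∑ i ∈ s, p i) = ∑ i ∈ s, p i) :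
    (∀ i ∈ s, (∑ j ∈ s, p j) * p i = p i) ∧
    (∀ i ∈ s, ∀ j ∈ s, i ≠ j → p i * p j = 0) := by
  set q := ∑ j ∈ s, p j with hqdef
  have hqsa : star q = q := by
    rw [hqdef, star_sum]; exact Finset.sum_congr rfl hsa
  have hnn : ∀ i ∈ s, (0:A) ≤ p i := fun i hi => proj_nonneg (hsa i hi) (hid i hi)
  have hle : ∀ i ∈ s, p i ≤ q := by
    intro i hi
    have h1 : q - p i = ∑ j ∈ s.erase i, p j := by
      rw [hqdef, ← Finset.add_sum_erase s p hi]; abel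
    have h2 : (0:A) ≤ q - p i := by
      rw [h1]; exact Finset.sum_nonneg fun j hj => hnn j (Finset.mem_of_mem_erase hj)
    exact sub_nonneg.mp h2
  have hqp : ∀ i ∈ s, q * p i = p i ∧ p i * q = p i := fun i hi =>
    proj_mul_of_le (hsa i hi) (hid i hi) hqsa hq (hle i hi)
  refine ⟨fun i hi => (hqp i hi).1, ?_⟩
  intro i hi j hj hij
  have hqi_sa : star (q - p i) = q - p i := by rw [star_sub, hqsa, hsa i hi]
  have hqi_id : (q - p i) * (q - p i) = q - p i := by
    rw [mul_sub, sub_mul, sub_mul, hq, (hqp i hi).1, (hqp i hi).2, hid i hi]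
    abel
  have hlej : p j ≤ q - p i := by
    have h1 : q - p i - p j = ∑ k ∈ (s.erase i).erase j, p k := by
      have hji : j ∈ s.erase i := Finset.mem_erase.mpr ⟨Ne.symm hij, hj⟩
      rw [hqdef, ← Finset.add_sum_erase s p hi, ← Finset.add_sum_erase _ p hji]
      abel
    have h2 : (0:A) ≤ q - p i - p j := by
      rw [h1]
      exact Finset.sum_nonneg fun k hk => hnn k
        (Finset.mem_of_mem_erase (Finset.mem_of_mem_erase hk))
    exact sub_nonneg.mp h2
  have := (proj_mul_of_le (hsa j hj) (hid j hj) hqi_sa hqi_id hlej).1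
  rw [sub_mul, (hqp j hj).1] at this
  exact sub_eq_self.mp this

end OrderAux

section CKAux
variable {G : FinGraph} {H : Type} [NormedAddCommGroup H] [InnerProductSpace ℂ H]
  [CompleteSpace H] (F : CKFamily G (H →L[ℂ] H))

/-- partial isometry relation -/
lemma CK.spi (e : G.E) : F.S e * star (F.S e) * F.S e = F.S e := by
  have hp := F.SS e
  have hpsa := F.P_sa (G.r e)
  have hpi := F.P_idem (G.r e)
  have key : star (F.S e * F.P (G.r e) - F.S e) * (F.S e * F.P (G.r e) - F.S e) = 0 := by
    rw [star_sub, star_mul, hpsa]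
    calc (F.P (G.r e) * star (F.S e) - star (F.S e)) * (F.S e * F.P (G.r e) - F.S e)
        = F.P (G.r e) * (star (F.S e) * F.S e) * F.P (G.r e)
            - F.P (G.r e) * (star (F.S e) * F.S e)
            - (star (F.S e) * F.S e) * F.P (G.r e) + star (F.S e) * F.S e := by noncomm_ring
      _ = 0 := by simp only [hp, hpi]; abel
  have hz := CStarRing.star_mul_self_eq_zero_iff _ |>.mp key
  have h2 : F.S e * F.P (G.r e) = F.S e := sub_eq_zero.mp hz
  rw [mul_assoc, hp, h2]

lemma CK.spi' (e : G.E) : star (F.S e) * F.S e * star (F.S e) = star (F.S e) := by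
  have := congrArg star (CK.spi F e)
  simpa [star_mul, mul_assoc] using this

lemma CK.SmulP (e : G.E) : F.S e * F.P (G.r e) = F.S e := by
  rw [← F.SS e, ← mul_assoc, CK.spi F e]

lemma CK.SmulP' (e : G.E) (v : G.V) (h : v ≠ G.r e) : F.S e * F.P v = 0 := by
  rw [← CK.SmulP F e, mul_assoc, F.P_orth _ _ (Ne.symm h), mul_zero]

lemma CK.Qproj (e : G.E) :
    (F.S e * star (F.S e)) * (F.S e * star (F.S e)) = F.S e * star (F.S e) := by
  rw [← mul_assoc, CK.spi F e]

lemma CK.Qsa (e : G.E) : star (F.S e * star (F.S e)) = F.S e * star (F.S e) := by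
  rw [star_mul, star_star]

lemma CK.fiber (v : G.V) (hv : ∃ e, G.s e = v) :
    (∀ e, G.s e = v → F.P v * (F.S e * star (F.S e)) = F.S e * star (F.S e)) ∧
    (∀ e f, e ≠ f → G.s e = v → G.s f = v →
      (F.S e * star (F.S e)) * (F.S f * star (F.S f)) = 0) := by
  have hck := F.CK v hv
  obtain ⟨h1, h2⟩ := sum_proj_orth (Finset.univ.filter (fun e => G.s e = v))
    (fun e => F.S e * star (F.S e)) (fun e _ => CK.Qsa F e) (fun e _ => CK.Qproj F e)
    (by rw [← hck, F.P_idem])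
  constructor
  · intro e he
    have := h1 e (by simp [he])
    rwa [← hck] at this
  · intro e f hef he hf
    exact h2 e (by simp [he]) f (by simp [hf]) hef

lemma CK.PmulS (e : G.E) : F.P (G.s e) * F.S e = F.S e := by
  have h := (CK.fiber F (G.s e) ⟨e, rfl⟩).1 e rfl
  calc F.P (G.s e) * F.S e = F.P (G.s e) * (F.S e * star (F.S e) * F.S e) := by
        rw [CK.spi F e]
    _ = (F.P (G.s e) * (F.S e * star (F.S e))) * F.S e := by noncomm_ring
    _ = F.S e * star (F.S e) * F.S e := by rw [h]
    _ = F.S e := CK.spi F e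

lemma CK.PmulS' (v : G.V) (e : G.E) (h : v ≠ G.s e) : F.P v * F.S e = 0 := by
  rw [← CK.PmulS F e, ← mul_assoc, F.P_orth _ _ h, zero_mul]

lemma CK.QmulP (e : G.E) :
    (F.S e * star (F.S e)) * F.P (G.s e) = F.S e * star (F.S e) := by
  have := congrArg star ((CK.fiber F (G.s e) ⟨e, rfl⟩).1 e rfl)
  rwa [star_mul, CK.Qsa, F.P_sa] at this

lemma CK.Sorth (e f : G.E) (h : e ≠ f) : star (F.S e) * F.S f = 0 := by
  have hQQ : (F.S e * star (F.S e)) * (F.S f * star (F.S f)) = 0 := by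
    by_cases hsv : G.s e = G.s f
    · exact (CK.fiber F (G.s e) ⟨e, rfl⟩).2 e f h rfl hsv.symm
    · calc (F.S e * star (F.S e)) * (F.S f * star (F.S f))
          = ((F.S e * star (F.S e)) * F.P (G.s e)) * (F.P (G.s f) * (F.S f * star (F.S f))) := by
            rw [CK.QmulP F e, (CK.fiber F (G.s f) ⟨f, rfl⟩).1 f rfl]
        _ = (F.S e * star (F.S e)) * (F.P (G.s e) * F.P (G.s f)) * (F.S f * star (F.S f)) := by
            noncomm_ring
        _ = 0 := by rw [F.P_orth _ _ hsv]; simp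
  calc star (F.S e) * F.S f
      = (star (F.S e) * F.S e * star (F.S e)) * (F.S f * star (F.S f) * F.S f) := by
        rw [CK.spi' F e, CK.spi F f]
    _ = star (F.S e) * ((F.S e * star (F.S e)) * (F.S f * star (F.S f))) * F.S f := by
        noncomm_ring
    _ = 0 := by rw [hQQ]; simp

lemma nIn_pos (e : G.E) : 0 < nIn G (G.r e) :=
  Finset.card_pos.mpr ⟨e, by simp [nIn]⟩

noncomputable def cc (G : FinGraph) (e : G.E) : ℂ :=
  (((Real.sqrt (nIn G (G.r e)) : ℝ) : ℂ))⁻¹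

noncomputable def Savg : H →L[ℂ] H := ∑ e : G.E, cc G e • F.S e

lemma cc_star (e : G.E) : star (cc G e) = cc G e := by
  simp [cc, Complex.star_def, map_inv₀, Complex.conj_ofReal]

lemma cc_mul (e : G.E) : cc G e * cc G e = ((nIn G (G.r e) : ℂ))⁻¹ := by
  rw [cc, ← mul_inv, ← Complex.ofReal_mul, Real.mul_self_sqrt (Nat.cast_nonneg _)]
  push_cast
  ring

lemma cc_cancel (e : G.E) :
    ((Real.sqrt (nIn G (G.r e)) : ℝ) : ℂ) * cc G e = 1 :=
  mul_inv_cancel₀ (Complex.ofReal_ne_zero.mpr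
    (Real.sqrt_ne_zero'.mpr (by exact_mod_cast nIn_pos (G := G) e)))

lemma starSavg : star (Savg F) = ∑ e : G.E, cc G e • star (F.S e) := by
  simp only [Savg, star_sum, star_smul, cc_star]

lemma w1 : star (Savg F) * Savg F
    = ∑ e : G.E, ((nIn G (G.r e) : ℂ))⁻¹ • F.P (G.r e) := by
  rw [starSavg, Savg, Finset.sum_mul_sum]
  refine Finset.sum_congr rfl fun e _ => ?_
  rw [Finset.sum_eq_single e (fun f _ hf => by
      rw [smul_mul_assoc, mul_smul_comm, CK.Sorth F e f (Ne.symm hf), smul_zero, smul_zero])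
    (by simp)]
  rw [smul_mul_assoc, mul_smul_comm, smul_smul, F.SS, cc_mul]

lemma hPS (v : G.V) : F.P v * Savg F
    = ∑ f ∈ Finset.univ.filter (fun f => G.s f = v), cc G f • F.S f := by
  rw [Savg, Finset.mul_sum, Finset.sum_filter]
  refine Finset.sum_congr rfl fun f _ => ?_
  rw [mul_smul_comm]
  by_cases hf : G.s f = v
  · rw [if_pos hf, ← hf, CK.PmulS F f]
  · rw [if_neg hf, CK.PmulS' F v f (fun h => hf h.symm), smul_zero]

lemma w2 (v : G.V) : star (Savg F) * F.P v * Savg F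
    = ∑ e ∈ Finset.univ.filter (fun e => G.s e = v),
        ((nIn G (G.r e) : ℂ))⁻¹ • F.P (G.r e) := by
  rw [mul_assoc, hPS F v, starSavg, Finset.sum_mul_sum, Finset.sum_comm]
  refine Finset.sum_congr rfl fun f _ => ?_
  rw [Finset.sum_eq_single f (fun e _ he => by
      rw [smul_mul_assoc, mul_smul_comm, CK.Sorth F e f he, smul_zero, smul_zero])
    (by simp)]
  rw [smul_mul_assoc, mul_smul_comm, smul_smul, F.SS, cc_mul]

lemma w3 : (∑ e : G.E, ((nIn G (G.r e) : ℂ))⁻¹ • F.P (G.r e))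
    = ∑ v ∈ Finset.univ.filter (fun v => ∃ e : G.E, G.r e = v), F.P v := by
  calc ∑ e : G.E, ((nIn G (G.r e) : ℂ))⁻¹ • F.P (G.r e)
      = ∑ v : G.V, ∑ e ∈ Finset.univ.filter (fun e => G.r e = v),
          ((nIn G (G.r e) : ℂ))⁻¹ • F.P (G.r e) :=
        (Finset.sum_fiberwise_of_maps_to (fun e _ => Finset.mem_univ _) _).symm
    _ = ∑ v : G.V, if (∃ e : G.E, G.r e = v) then F.P v else 0 := by
        refine Finset.sum_congr rfl fun v _ => ?_
        by_cases hv : ∃ e : G.E, G.r e = v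
        · rw [if_pos hv]
          have hcongr : ∀ e ∈ Finset.univ.filter (fun e => G.r e = v),
              ((nIn G (G.r e) : ℂ))⁻¹ • F.P (G.r e) = ((nIn G v : ℂ))⁻¹ • F.P v := by
            intro e he
            have : G.r e = v := (Finset.mem_filter.mp he).2
            rw [this]
          rw [Finset.sum_congr rfl hcongr, Finset.sum_const]
          have hcard : (Finset.univ.filter (fun e => G.r e = v)).card = nIn G v := rfl
          obtain ⟨e, he⟩ := hv
          have hne : (nIn G v : ℂ) ≠ 0 :=
            Nat.cast_ne_zero.mpr (Finset.card_pos.mpr ⟨e, by simp [he]⟩).ne'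
          rw [hcard, ← Nat.cast_smul_eq_nsmul ℂ, smul_smul, mul_inv_cancel₀ hne, one_smul]
        · rw [if_neg hv]
          rw [Finset.filter_false_of_mem (fun e _ => fun h => hv ⟨e, h⟩), Finset.sum_empty]
    _ = ∑ v ∈ Finset.univ.filter (fun v => ∃ e : G.E, G.r e = v), F.P v := by
        rw [Finset.sum_filter]

lemma claim2 : star (Savg F) * Savg F
    = ∑ v ∈ Finset.univ.filter (fun v => ∃ e : G.E, G.r e = v), F.P v :=
  (w1 F).trans (w3 F)

lemma claim1 : Savg F * star (Savg F) * Savg F = Savg F := by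
  rw [mul_assoc, claim2 F]
  conv_lhs => rw [Savg]
  conv_rhs => rw [Savg]
  rw [Finset.sum_mul]
  refine Finset.sum_congr rfl fun e _ => ?_
  rw [smul_mul_assoc, Finset.mul_sum,
    Finset.sum_eq_single_of_mem (G.r e)
      (Finset.mem_filter.mpr ⟨Finset.mem_univ _, ⟨e, rfl⟩⟩)
      (fun v _ hv => CK.SmulP' F e v hv),
    CK.SmulP F e]

lemma claim3 (e : G.E) :
    ((Real.sqrt (nIn G (G.r e)) : ℝ) : ℂ) • (F.S e * star (F.S e) * Savg F) = F.S e := by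
  have h1 : F.S e * star (F.S e) * Savg F = cc G e • F.S e := by
    rw [Savg, Finset.mul_sum,
      Finset.sum_eq_single e (fun f _ hf => by
        rw [mul_smul_comm, mul_assoc, CK.Sorth F e f (Ne.symm hf), mul_zero, smul_zero])
      (by simp)]
    rw [mul_smul_comm, CK.spi F e]
  rw [h1, smul_smul, cc_cancel e, one_smul]

lemma claim5 (v : G.V) (hv : ∀ e : G.E, G.s e ≠ v) :
    star (Savg F) * F.P v * Savg F = 0 := by
  rw [w2 F v, Finset.filter_false_of_mem (fun e _ => hv e), Finset.sum_empty]

end CKAux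

/-- For a Cuntz–Krieger `E`-family `{P_v}, {S_e}` on a Hilbert space, the operator
`S = Σ_e n_{r(e)}^{-1/2} S_e` is a partial isometry with `S*S = Σ_{v ∈ r(E¹)} P_v`,
one recovers `S_e = √n_{r(e)} (S_e S_e*) S`, and `S* P_v S = Σ_{s(e)=v} P_{r(e)}/n_{r(e)}`
for `v` not a sink while `S* P_v S = 0` for `v` a sink. -/
theorem ck_family_averaged_partial_isometry {G : FinGraph}
    {H : Type} [NormedAddCommGroup H] [InnerProductSpace ℂ H] [CompleteSpace H]
    (F : CKFamily G (H →L[ℂ] H)) :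
    (∑ e : G.E, (((Real.sqrt (nIn G (G.r e)) : ℝ) : ℂ))⁻¹ • F.S e) *
        star (∑ e : G.E, (((Real.sqrt (nIn G (G.r e)) : ℝ) : ℂ))⁻¹ • F.S e) *
        (∑ e : G.E, (((Real.sqrt (nIn G (G.r e)) : ℝ) : ℂ))⁻¹ • F.S e) =
      (∑ e : G.E, (((Real.sqrt (nIn G (G.r e)) : ℝ) : ℂ))⁻¹ • F.S e) ∧
    star (∑ e : G.E, (((Real.sqrt (nIn G (G.r e)) : ℝ) : ℂ))⁻¹ • F.S e) *
        (∑ e : G.E, (((Real.sqrt (nIn G (G.r e)) : ℝ) : ℂ))⁻¹ • F.S e) =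
      ∑ v ∈ Finset.univ.filter (fun v => ∃ e : G.E, G.r e = v), F.P v ∧
    (∀ e : G.E,
      ((Real.sqrt (nIn G (G.r e)) : ℝ) : ℂ) • (F.S e * star (F.S e) *
        (∑ f : G.E, (((Real.sqrt (nIn G (G.r f)) : ℝ) : ℂ))⁻¹ • F.S f)) = F.S e) ∧
    (∀ v : G.V, (∃ e : G.E, G.s e = v) →
      star (∑ e : G.E, (((Real.sqrt (nIn G (G.r e)) : ℝ) : ℂ))⁻¹ • F.S e) * F.P v *
          (∑ e : G.E, (((Real.sqrt (nIn G (G.r e)) : ℝ) : ℂ))⁻¹ • F.S e) =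
        ∑ e ∈ Finset.univ.filter (fun e => G.s e = v),
          ((nIn G (G.r e) : ℂ))⁻¹ • F.P (G.r e)) ∧
    (∀ v : G.V, (∀ e : G.E, G.s e ≠ v) →
      star (∑ e : G.E, (((Real.sqrt (nIn G (G.r e)) : ℝ) : ℂ))⁻¹ • F.S e) * F.P v *
        (∑ e : G.E, (((Real.sqrt (nIn G (G.r e)) : ℝ) : ℂ))⁻¹ • F.S e) = 0) := by
  exact ⟨claim1 F, claim2 F, fun e => claim3 F e, fun v _ => w2 F v,
    fun v hv => claim5 F v hv⟩
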